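/- Let f : X × U → X be a function. Define A_f = {(x,y) ∈ X² : ∃ u, y = f(x,u)} and U_f = {(x,y) ∈ A_f : ∃! u, y = f(x,u)}, and for (x,y) ∈ U_f let σ(x,y) be the unique u with y = f(x,u). Assume A_f is symmetric and A_f \ U_f is contained in the diagonal of X². Define R_f = {(x,u) : (x, f(x,u)) ∈ U_f} and g_f(x,u) = σ(f(x,u), x) if (x,u) ∈ R_f, and g_f(x,u) = u otherwise. Then the map H(x,u) = (f(x,u), g_f(x,u)) is an involution on X × U, i.e. H(H(x,u)) = (x,u) for all (x,u). -/

import Mathlib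

open Classical in

/-- involutive augmentation `H = (f, g_f)` is an involution. -/
theorem involutive_augmentation_is_involution {X U : Type*} (f : X → U → X)
    (σ : X → X → U)
    (hσ : ∀ x y u, (∃! w, y = f x w) → (y = f x u ↔ σ x y = u))
    (hsymm : ∀ x y : X, (∃ u, y = f x u) → (∃ u, x = f y u))
    (hdiag : ∀ x y : X, (∃ u, y = f x u) → ¬ (∃! u, y = f x u) → x = y)
    (g : X → U → U)
    (hg : ∀ x u, g x u = if (∃! w, f x u = f x w) then σ (f x u) x else u) :
    ∀ x u, f (f x u) (g x u) = x ∧ g (f x u) (g x u) = u := by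
  intro x u
  set y := f x u with hy
  by_cases hcase : ∃! w, y = f x w
  · -- g x u = σ y x
    have hgxu : g x u = σ y x := by rw [hg]; exact if_pos hcase
    -- uniqueness of v with x = f y v
    have hux : ∃! v, x = f y v := by
      by_contra hnot
      have hyx : y = x := hdiag y x (hsymm x y ⟨u, hy⟩) hnot
      exact hnot (by rw [hyx]; exact (hyx ▸ hcase))
    have hfyx : f y (σ y x) = x := ((hσ y x (σ y x) hux).mpr rfl).symm
    constructor
    · rw [hgxu]; exact hfyx
    · rw [hgxu, hg]
      have hcond : ∃! w, f y (σ y x) = f y w := by rw [hfyx]; exact hux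
      rw [if_pos hcond, hfyx]
      exact (hσ x y u hcase).mp hy
  · have hxy : x = y := hdiag x y ⟨u, hy⟩ hcase
    have hgxu : g x u = u := by rw [hg]; exact if_neg hcase
    constructor
    · rw [hgxu, ← hxy, ← hy, ← hxy]
    · rw [hgxu, ← hxy, hgxu]
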